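/- Let K_{SP} be a generalized number lattice on the disjoint union S ⊎ P. Then (K_{SP} ∘ S)^d = K_{SP}^d × S and (K_{SP} × S)^d = K_{SP}^d ∘ S, where K_{SP} ∘ S := { f_S : (f_S, f_P) ∈ K_{SP} for some f_P } is the restriction and K_{SP} × S := { f_S : (f_S, 0_P) ∈ K_{SP} } is the contraction. -/

import Mathlib

/-- A generalized number lattice. -/
def IsGenNumLat {M : Type*} [AddCommGroup M] [Module ℚ M] (K : Set M) : Prop :=
  ∃ (n k : ℕ) (b : Fin n → M) (c : Fin k → M),
    K = {x | ∃ (l : Fin n → ℤ) (m : Fin k → ℚ),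
      x = (∑ i, (l i : ℚ) • b i) + ∑ j, m j • c j}

/-- The dual of a collection of vectors on a single index set. -/
def dualLat {X : Type*} [Fintype X] (K : Set (X → ℚ)) : Set (X → ℚ) :=
  {g | ∀ f ∈ K, ∃ z : ℤ, ∑ x, f x * g x = (z : ℚ)}

/-- The dual of a collection of vectors on a disjoint union `S ⊎ P`,
represented as pairs. -/
def dualLat2 {A B : Type*} [Fintype A] [Fintype B]
    (K : Set ((A → ℚ) × (B → ℚ))) : Set ((A → ℚ) × (B → ℚ)) :=
  {g | ∀ f ∈ K, ∃ z : ℤ, (∑ a, f.1 a * g.1 a) + ∑ b, f.2 b * g.2 b = (z : ℚ)}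


/-- Extend prescribed values on a finite family to a linear functional,
given consistency on relations. -/
lemma helper2 {V : Type*} [AddCommGroup V] [Module ℚ V] {ι : Type*} [Fintype ι]
    (c : ι → V) (s : ι → ℚ)
    (h : ∀ m : ι → ℚ, ∑ j, m j • c j = 0 → ∑ j, m j * s j = 0) :
    ∃ ρ : V →ₗ[ℚ] ℚ, ∀ j, ρ (c j) = s j := by
  classical
  let C : (ι → ℚ) →ₗ[ℚ] V := Fintype.linearCombination ℚ c
  let T : (ι → ℚ) →ₗ[ℚ] ℚ := Fintype.linearCombination ℚ s
  have hCT : ∀ m : ι → ℚ, C m = ∑ j, m j • c j := by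
    intro m; simp [C, Fintype.linearCombination_apply]
  have hTT : ∀ m : ι → ℚ, T m = ∑ j, m j * s j := by
    intro m; simp [T, Fintype.linearCombination_apply, smul_eq_mul]
  have hker : LinearMap.ker C ≤ LinearMap.ker T := by
    intro m hm
    rw [LinearMap.mem_ker] at hm ⊢
    rw [hTT]; exact h m (by rw [← hCT]; exact hm)
  obtain ⟨W', hW'⟩ := Submodule.exists_isCompl (LinearMap.range C)
  let pr := Submodule.linearProjOfIsCompl _ _ hW'
  refine ⟨((Submodule.liftQ _ T hker).comp
    (LinearMap.quotKerEquivRange C).symm.toLinearMap).comp pr, ?_⟩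
  intro j
  have h1 : C (Pi.single j 1) = c j := by
    rw [hCT]; simp [Pi.single_apply, ite_smul]
  have hmem : c j ∈ LinearMap.range C := ⟨Pi.single j 1, h1⟩
  have h2 : pr (c j) = ⟨c j, hmem⟩ :=
    Submodule.linearProjOfIsCompl_apply_left hW' ⟨c j, hmem⟩
  have h3 : (LinearMap.quotKerEquivRange C).symm ⟨c j, hmem⟩ =
      Submodule.Quotient.mk (Pi.single j 1) := by
    have := LinearMap.quotKerEquivRange_symm_apply_image C (Pi.single j 1)
      (by rw [h1]; exact hmem)
    simpa [h1] using this
  simp only [LinearMap.comp_apply, h2, LinearEquiv.coe_toLinearMap, h3]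
  rw [Submodule.liftQ_apply]
  rw [hTT]; simp [Pi.single_apply, ite_mul]

lemma helper1 {V : Type*} [AddCommGroup V] [Module ℚ V] {ι : Type*} [Fintype ι]
    (e : ι → V) (he : LinearIndependent ℚ e) (r : ι → ℚ) :
    ∃ σ : V →ₗ[ℚ] ℚ, ∀ κ, σ (e κ) = r κ := by
  refine helper2 e r (fun m hm => ?_)
  have := linearIndependent_iff'.mp he Finset.univ m (by simpa using hm)
  simp only [Finset.mem_univ, forall_true_left] at this
  simp [this]

instance qmodNZSD {W : Type*} [AddCommGroup W] [Module ℚ W] : NoZeroSMulDivisors ℤ W := by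
  constructor
  intro z x h
  rcases eq_or_ne z 0 with hz | hz
  · exact Or.inl hz
  · right
    have h2 : ((z : ℚ)) • x = 0 := by rwa [Int.cast_smul_eq_zsmul]
    have hz' : (z : ℚ) ≠ 0 := Int.cast_ne_zero.mpr hz
    simpa [hz'] using h2

lemma key {V : Type*} [AddCommGroup V] [Module ℚ V]
    {n k : ℕ} (v : Fin n → V) (c : Fin k → V) (t : Fin n → ℚ) (s : Fin k → ℚ)
    (H : ∀ (l : Fin n → ℤ) (m : Fin k → ℚ),
        ((∑ i, (l i : ℚ) • v i) + ∑ j, m j • c j = 0) →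
        ∃ z : ℤ, (∑ i, (l i : ℚ) * t i) + ∑ j, m j * s j = z) :
    ∃ σ : V →ₗ[ℚ] ℚ, (∀ j, σ (c j) = s j) ∧ ∀ i, ∃ z : ℤ, σ (v i) = t i + z := by
  classical
  -- Step 2: rho1 with rho1 (c j) = s j
  have hcons : ∀ m : Fin k → ℚ, ∑ j, m j • c j = 0 → ∑ j, m j * s j = 0 := by
    intro m hm
    by_contra hne
    have hr : (∑ j, m j * s j) ≠ 0 := hne
    obtain ⟨z, hz⟩ := H 0 (fun j => (1/(2*(∑ j, m j * s j))) * m j) (by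
      have hc : ∑ j, ((1/(2*(∑ j', m j' * s j'))) * m j) • c j
          = (1/(2*(∑ j', m j' * s j'))) • ∑ j, m j • c j := by
        rw [Finset.smul_sum]
        exact Finset.sum_congr rfl (fun j _ => (smul_smul _ _ _).symm)
      rw [hc, hm, smul_zero]
      simp only [Pi.zero_apply, Int.cast_zero, zero_smul, Finset.sum_const_zero, add_zero])
    have hsum : ∑ j, ((1/(2*(∑ j', m j' * s j'))) * m j) * s j
        = (1/(2*(∑ j', m j' * s j'))) * (∑ j, m j * s j) := by
      exact (Finset.sum_congr rfl (fun j _ => mul_assoc _ _ _)).trans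
        (Finset.mul_sum _ _ _).symm
    have hz' : (1/(2*(∑ j', m j' * s j'))) * (∑ j, m j * s j) = (z:ℚ) := by
      rw [← hsum]
      have h0 : ∑ i, ((0 : Fin n → ℤ) i : ℚ) * t i = 0 := by simp
      rw [h0, zero_add] at hz
      exact hz
    have h12 : (1:ℚ)/(2*(∑ j', m j' * s j')) * (∑ j, m j * s j) = 1/2 := by
      field_simp
    have h2 : (2 * z : ℤ) = 1 := by
      have : 2 * (z:ℚ) = 1 := by rw [← hz', h12]; ring
      exact_mod_cast this
    omega
  obtain ⟨ρ₁, hρ₁⟩ := helper2 c s hcons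
  set U : Submodule ℚ V := Submodule.span ℚ (Set.range c) with hU
  set M : Submodule ℤ (V ⧸ U) := Submodule.span ℤ (Set.range (fun i => U.mkQ (v i))) with hM
  haveI : Module.Finite ℤ M := Module.Finite.span_of_finite ℤ (Set.finite_range _)
  set ι := Module.Free.ChooseBasisIndex ℤ M with hι
  set e : Module.Basis ι ℤ M := Module.Free.chooseBasis ℤ M with he
  -- lift basis elements through the integer span
  have hlift : ∀ κ : ι, ∃ l : Fin n → ℤ, ∑ i, l i • U.mkQ (v i) = (e κ : V ⧸ U) := by
    intro κ
    exact (Submodule.mem_span_range_iff_exists_fun ℤ).mp (e κ).2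
  choose lft hlft using hlift
  set t' : Fin n → ℚ := fun i => t i - ρ₁ (v i) with ht'
  set T' : (Fin n → ℤ) →+ ℚ :=
    { toFun := fun l => ∑ i, (l i : ℚ) * t' i
      map_zero' := by simp
      map_add' := by
        intro a b
        rw [← Finset.sum_add_distrib]
        refine Finset.sum_congr rfl (fun i _ => ?_)
        simp only [Pi.add_apply]
        push_cast
        ring } with hT'
  set p : (Fin n → ℤ) →+ (V ⧸ U) :=
    { toFun := fun l => ∑ i, l i • U.mkQ (v i)
      map_zero' := by simp
      map_add' := by
        intro a b
        rw [← Finset.sum_add_distrib]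
        refine Finset.sum_congr rfl (fun i _ => ?_)
        rw [Pi.add_apply, add_smul] } with hp
  have hT'app : ∀ l : Fin n → ℤ, T' l = ∑ i', (l i' : ℚ) * t' i' := fun _ => rfl
  have heZ : LinearIndependent ℤ (fun κ : ι => (e κ : V ⧸ U)) :=
    e.linearIndependent.map' M.subtype (Submodule.ker_subtype M)
  have heQ : LinearIndependent ℚ (fun κ : ι => (e κ : V ⧸ U)) :=
    (LinearIndependent.iff_fractionRing ℤ ℚ).mp heZ
  obtain ⟨σ', hσ'⟩ := helper1 _ heQ (fun κ => T' (lft κ))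
  refine ⟨ρ₁ + σ'.comp U.mkQ, ?_, ?_⟩
  · intro j
    have hcj : U.mkQ (c j) = 0 := by
      rw [Submodule.mkQ_apply, Submodule.Quotient.mk_eq_zero]
      exact Submodule.subset_span ⟨j, rfl⟩
    simp [hρ₁ j, hcj]
  · intro i
    have hmemM : U.mkQ (v i) ∈ M := Submodule.subset_span ⟨i, rfl⟩
    set w : M := ⟨U.mkQ (v i), hmemM⟩ with hw0
    set a : ι → ℤ := e.equivFun w with ha
    have hw : ∑ κ, a κ • e κ = w := e.sum_equivFun w
    have hwQ : ∑ κ, a κ • (e κ : V ⧸ U) = U.mkQ (v i) := by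
      have h1 := congrArg (M.subtype) hw
      rw [map_sum] at h1
      simpa [hw0] using h1
    set l₀ : Fin n → ℤ := (∑ κ, a κ • lft κ) - Pi.single i 1 with hl₀
    have hps : p (Pi.single i 1) = U.mkQ (v i) := by
      simp [hp, Pi.single_apply, ite_smul]
    have hpl : ∀ l : Fin n → ℤ, p l = ∑ i', l i' • U.mkQ (v i') := fun _ => rfl
    have hpl₀ : p l₀ = 0 := by
      rw [hl₀, map_sub, map_sum, hps]
      have : ∀ κ : ι, p (a κ • lft κ) = a κ • (e κ : V ⧸ U) := by
        intro κ
        rw [map_zsmul, hpl, hlft]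
      rw [Finset.sum_congr rfl (fun κ _ => this κ), hwQ, sub_self]
    have hUmem : (∑ i', (l₀ i' : ℚ) • v i') ∈ U := by
      have h1 : U.mkQ (∑ i', (l₀ i' : ℚ) • v i') = p l₀ := by
        rw [map_sum, hpl]
        exact Finset.sum_congr rfl (fun i' _ => by
          rw [map_smul, Int.cast_smul_eq_zsmul])
      rw [← Submodule.Quotient.mk_eq_zero, ← Submodule.mkQ_apply, h1, hpl₀]
    obtain ⟨m, hm⟩ := (Submodule.mem_span_range_iff_exists_fun ℚ).mp hUmem
    obtain ⟨z, hz⟩ := H l₀ (-m) (by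
      have : ∑ j, (-m) j • c j = -∑ j, m j • c j := by
        rw [← Finset.sum_neg_distrib]
        exact Finset.sum_congr rfl (fun j _ => by rw [Pi.neg_apply, neg_smul])
      rw [this, hm, add_neg_cancel])
    -- compute T' l₀
    have hT'l₀ : T' l₀ = z := by
      have h1 : T' l₀ = ∑ i', (l₀ i' : ℚ) * t i' - ρ₁ (∑ i', (l₀ i' : ℚ) • v i') := by
        rw [hT'app, map_sum]
        rw [← Finset.sum_sub_distrib]
        refine Finset.sum_congr rfl (fun i' _ => ?_)
        rw [map_smul, smul_eq_mul]
        show (l₀ i' : ℚ) * (t i' - ρ₁ (v i')) = _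
        ring
      have h2 : ρ₁ (∑ i', (l₀ i' : ℚ) • v i') = ∑ j, m j * s j := by
        rw [← hm, map_sum]
        exact Finset.sum_congr rfl (fun j _ => by rw [map_smul, smul_eq_mul, hρ₁])
      have h3 : ∑ j, (-m) j * s j = -∑ j, m j * s j := by
        rw [← Finset.sum_neg_distrib]
        exact Finset.sum_congr rfl (fun j _ => by rw [Pi.neg_apply]; ring)
      rw [h1, h2]
      rw [h3] at hz
      linarith
    have hT's : T' (Pi.single i 1) = t' i := by
      rw [hT'app]
      simp [Pi.single_apply, ite_mul]
    have hσ'v : σ' (U.mkQ (v i)) = t' i + z := by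
      rw [← hwQ, map_sum]
      have h4 : ∀ κ : ι, σ' (a κ • (e κ : V ⧸ U)) = a κ • T' (lft κ) := by
        intro κ
        rw [map_zsmul, hσ']
      rw [Finset.sum_congr rfl (fun κ _ => h4 κ)]
      have h5 : ∑ κ, a κ • T' (lft κ) = T' (∑ κ, a κ • lft κ) := by
        rw [map_sum]
        exact Finset.sum_congr rfl (fun κ _ => (map_zsmul T' _ _).symm)
      have h6 : (∑ κ, a κ • lft κ) = l₀ + Pi.single i 1 := by
        rw [hl₀]; abel
      rw [h5, h6, map_add, hT'l₀, hT's]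
      ring
    have : (ρ₁ + σ'.comp U.mkQ) (v i) = t i + z := by
      simp only [LinearMap.add_apply, LinearMap.comp_apply, hσ'v, ht']
      ring
    exact ⟨z, this⟩

/-- The pairing with a fixed vector, as a linear map. -/
def pairL {X : Type*} [Fintype X] (g : X → ℚ) : (X → ℚ) →ₗ[ℚ] ℚ where
  toFun := fun f => ∑ x, f x * g x
  map_add' := by
    intro a b
    rw [← Finset.sum_add_distrib]
    exact Finset.sum_congr rfl (fun x _ => by rw [Pi.add_apply]; ring)
  map_smul' := by
    intro q f
    rw [RingHom.id_apply, smul_eq_mul, Finset.mul_sum]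
    exact Finset.sum_congr rfl (fun x _ => by rw [Pi.smul_apply, smul_eq_mul]; ring)

@[simp] lemma pairL_apply {X : Type*} [Fintype X] (g f : X → ℚ) :
    pairL g f = ∑ x, f x * g x := rfl

theorem stmt5 {S P : Type*} [Fintype S] [Fintype P]
    (K : Set ((S → ℚ) × (P → ℚ))) (hK : IsGenNumLat K) :
    -- (K ∘ S)ᵈ = Kᵈ × S
    dualLat {fS | ∃ fP, (fS, fP) ∈ K} = {fS | (fS, 0) ∈ dualLat2 K} ∧
    -- (K × S)ᵈ = Kᵈ ∘ S
    dualLat {fS | (fS, 0) ∈ K} = {fS | ∃ fP, (fS, fP) ∈ dualLat2 K} := by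
  obtain ⟨n, k, b, c, hKeq⟩ := hK
  constructor
  · ext gS
    simp only [dualLat, dualLat2, Set.mem_setOf_eq]
    constructor
    · intro h f hf
      obtain ⟨z, hz⟩ := h f.1 ⟨f.2, by simpa using hf⟩
      exact ⟨z, by simpa using hz⟩
    · rintro h fS ⟨fP, hfP⟩
      obtain ⟨z, hz⟩ := h (fS, fP) hfP
      exact ⟨z, by simpa using hz⟩
  · ext gS
    simp only [dualLat, dualLat2, Set.mem_setOf_eq]
    constructor
    · intro hg
      classical
      set μp : ((S → ℚ) × (P → ℚ)) →ₗ[ℚ] ℚ :=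
        (pairL gS).comp (LinearMap.fst ℚ (S → ℚ) (P → ℚ)) with hμp
      have hμapp : ∀ f : (S → ℚ) × (P → ℚ), μp f = ∑ x, f.1 x * gS x := fun _ => rfl
      have hH : ∀ (l : Fin n → ℤ) (m : Fin k → ℚ),
          ((∑ i, (l i : ℚ) • (b i).2) + ∑ j, m j • (c j).2 = 0) →
          ∃ z : ℤ, (∑ i, (l i : ℚ) * (-(μp (b i)))) + ∑ j, m j * (-(μp (c j))) = z := by
        intro l m h0
        set F := (∑ i, (l i : ℚ) • b i) + ∑ j, m j • c j with hF
        set πs : ((S → ℚ) × (P → ℚ)) →ₗ[ℚ] (P → ℚ) := LinearMap.snd ℚ (S → ℚ) (P → ℚ)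
          with hπs
        have hF2 : F.2 = 0 := by
          have : πs F = (∑ i, (l i : ℚ) • (b i).2) + ∑ j, m j • (c j).2 := by
            rw [hF, map_add, map_sum, map_sum]
            simp only [map_smul]
            rfl
          rw [show F.2 = πs F from rfl, this, h0]
        have hFK : F ∈ K := by rw [hKeq]; exact ⟨l, m, rfl⟩
        have hFS : (F.1, (0 : P → ℚ)) ∈ K := by
          have : (F.1, (0 : P → ℚ)) = F := Prod.ext rfl hF2.symm
          rw [this]; exact hFK
        obtain ⟨z, hz⟩ := hg F.1 hFS
        have hμFz : μp F = z := hz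
        have hμF : μp F = (∑ i, (l i : ℚ) * μp (b i)) + ∑ j, m j * μp (c j) := by
          rw [hF, map_add, map_sum, map_sum]
          congr 1 <;>
            exact Finset.sum_congr rfl (fun _ _ => by rw [map_smul, smul_eq_mul])
        refine ⟨-z, ?_⟩
        have e1 : ∑ i, (l i : ℚ) * (-(μp (b i))) = -∑ i, (l i : ℚ) * μp (b i) := by
          rw [← Finset.sum_neg_distrib]
          exact Finset.sum_congr rfl (fun _ _ => by ring)
        have e2 : ∑ j, m j * (-(μp (c j))) = -∑ j, m j * μp (c j) := by
          rw [← Finset.sum_neg_distrib]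
          exact Finset.sum_congr rfl (fun _ _ => by ring)
        rw [e1, e2, ← neg_add, ← hμF, hμFz]
        push_cast
        ring
      obtain ⟨σ, hσc, hσv⟩ := key (fun i => (b i).2) (fun j => (c j).2)
        (fun i => -(μp (b i))) (fun j => -(μp (c j))) hH
      choose zf hzf using hσv
      set gP : P → ℚ := fun x => σ (fun j => if x = j then 1 else 0) with hgP
      have hgPs : ∀ f : P → ℚ, ∑ x, f x * gP x = σ f := by
        intro f
        conv_rhs => rw [pi_eq_sum_univ f]
        rw [map_sum]
        exact Finset.sum_congr rfl (fun x _ => by rw [map_smul, smul_eq_mul])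
      refine ⟨gP, ?_⟩
      intro f hf
      rw [hKeq] at hf
      obtain ⟨l, m, hflm⟩ := hf
      set Φ : ((S → ℚ) × (P → ℚ)) →ₗ[ℚ] ℚ :=
        μp + σ.comp (LinearMap.snd ℚ (S → ℚ) (P → ℚ)) with hΦ
      have hΦb : ∀ i, Φ (b i) = zf i := by
        intro i
        have : Φ (b i) = μp (b i) + σ ((b i).2) := rfl
        rw [this, hzf i]
        ring
      have hΦc : ∀ j, Φ (c j) = 0 := by
        intro j
        have : Φ (c j) = μp (c j) + σ ((c j).2) := rfl
        rw [this, hσc j]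
        ring
      have hΦf : Φ f = ∑ i, (l i : ℚ) * (zf i : ℚ) := by
        rw [hflm, map_add, map_sum, map_sum]
        have e1 : ∀ i, Φ ((l i : ℚ) • b i) = (l i : ℚ) * (zf i : ℚ) := by
          intro i; rw [map_smul, smul_eq_mul, hΦb]
        have e2 : ∀ j, Φ (m j • c j) = 0 := by
          intro j; rw [map_smul, smul_eq_mul, hΦc, mul_zero]
        rw [Finset.sum_congr rfl (fun i _ => e1 i), Finset.sum_congr rfl (fun j _ => e2 j)]
        simp
      refine ⟨∑ i, l i * zf i, ?_⟩
      have hfin : (∑ x, f.1 x * gS x) + ∑ x, f.2 x * gP x = Φ f := by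
        rw [hgPs]
        rfl
      rw [hfin, hΦf]
      push_cast
      rfl
    · rintro ⟨gP, hgP⟩ fS hfS
      obtain ⟨z, hz⟩ := hgP (fS, 0) hfS
      exact ⟨z, by simpa using hz⟩
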